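/- Let (ξ_k)_{k≥1} be i.i.d. ℤ²-valued random variables with law ν. Define the process (Z_k)_{k≥0} by Z_0 = 0 and: if ξ_{k+1} = (1,−1) then Z_{k+1} = Z_k − 1; if ξ_{k+1} = (−i,j) with i,j ≥ 0 then Z_{k+1} = Z_k + j if Z_k ≥ 0, Z_{k+1} = Z_k + i if Z_k < 0 and Z_k < −i, and Z_{k+1} = j if Z_k < 0 and Z_k ≥ −i. Then (Z_k)_{k≥0} is a random walk: its increments (Z_{k+1} − Z_k)_{k≥0} are independent and identically distributed with law μ on ℤ given by μ({−1}) = 1/2 and μ({j}) = 2^{−j−2} for every j ∈ ℤ_{≥0}. -/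

import Mathlib

open MeasureTheory ProbabilityTheory
open scoped ENNReal

/-- The mass function of the step distribution `ν`:
`ν({(1,-1)}) = 1/2` and `ν({(-i,j)}) = 2^{-i-j-3}` for `i, j ≥ 0`. -/
noncomputable def nuMass (d : ℤ × ℤ) : ℝ≥0∞ :=
  if d = (1, -1) then 1 / 2
  else if d.1 ≤ 0 ∧ 0 ≤ d.2 then 2⁻¹ ^ (-d.1 + d.2 + 3).toNat
  else 0

/-- The mass function of the law `μ` on `ℤ`:
`μ({-1}) = 1/2` and `μ({j}) = 2^{-j-2}` for `j ≥ 0`. -/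
noncomputable def muMass (z : ℤ) : ℝ≥0∞ :=
  if z = -1 then 1 / 2
  else if 0 ≤ z then 2⁻¹ ^ (z + 2).toNat
  else 0

/-- One step of the coalescent walk: if the walk increment is `(1,-1)` the trajectory decreases
by `1`; if it is `(-i,j)` the trajectory moves to `z+j` if `z ≥ 0`, to `z+i` if `z < -i`, and
to `j` if `-i ≤ z < 0`. -/
def zstep (d : ℤ × ℤ) (z : ℤ) : ℤ :=
  if d = (1, -1) then z - 1
  else if 0 ≤ z then z + d.2
  else if z < d.1 then z - d.1
  else d.2

/-- The process `(Z_k)_{k≥0}` driven by the steps `ξ`: `Z_0 = 0` and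
`Z_{k+1} = zstep (ξ_k) (Z_k)`. -/
def Zproc {Ω : Type*} (ξ : ℕ → Ω → ℤ × ℤ) : ℕ → Ω → ℤ
  | 0 => fun _ => 0
  | k + 1 => fun ω => zstep (ξ k ω) (Zproc ξ k ω)

lemma geo_sum : ∑' i : ℕ, (2⁻¹ : ℝ≥0∞) ^ i = 2 := by
  rw [ENNReal.tsum_geometric, ENNReal.one_sub_inv_two, inv_inv]

lemma geo_shift (c : ℕ) : ∑' i : ℕ, (2⁻¹ : ℝ≥0∞) ^ (i + c) = (2⁻¹ : ℝ≥0∞) ^ c * 2 := by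
  simp_rw [pow_add]
  rw [ENNReal.tsum_mul_right, geo_sum, mul_comm]

lemma geo_shift' (c : ℕ) : ∑' i : ℕ, (2⁻¹ : ℝ≥0∞) ^ (i + (c + 1)) = (2⁻¹ : ℝ≥0∞) ^ c := by
  rw [geo_shift, pow_succ, mul_assoc, ENNReal.inv_mul_cancel two_ne_zero ENNReal.ofNat_ne_top,
    mul_one]

lemma geo_tail (m c : ℕ) :
    ∑' i : ℕ, (if m ≤ i then (2⁻¹ : ℝ≥0∞) ^ (i + (c + 1)) else 0)
      = (2⁻¹ : ℝ≥0∞) ^ (m + c) := by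
  have hinj : Function.Injective (fun i : ℕ => i + m) := fun a b h => by simpa using h
  have hsupp : Function.support (fun i : ℕ => (if m ≤ i then (2⁻¹ : ℝ≥0∞) ^ (i + (c + 1)) else 0))
      ⊆ Set.range (fun i : ℕ => i + m) := by
    intro i hi
    by_cases h : m ≤ i
    · exact ⟨i - m, by simp; omega⟩
    · simp [h] at hi
  rw [← hinj.tsum_eq hsupp]
  simp only [le_add_iff_nonneg_left, zero_le, if_true]
  have : ∀ i : ℕ, i + m + (c + 1) = i + (m + c + 1) := by omega
  simp_rw [this]
  exact geo_shift' (m + c)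

lemma tsum_split {β : Type*} [DecidableEq β] {f : β → ℝ≥0∞} (b : β) :
    ∑' x, f x = f b + ∑' x, if x = b then 0 else f x := by
  rw [ENNReal.tsum_eq_add_tsum_ite b]
  congr 1
  exact tsum_congr fun x => by by_cases h : x = b <;> simp [h]

lemma tsum_nuMass_zstep (z w : ℤ) :
    ∑' d : ℤ × ℤ, (if zstep d z - z = w then nuMass d else 0) = muMass w := by
  rw [tsum_split ((1, -1) : ℤ × ℤ)]
  have hfirst : (if zstep ((1 : ℤ), (-1 : ℤ)) z - z = w then nuMass (1, -1) else 0)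
      = if (-1 : ℤ) = w then 1 / 2 else 0 := by
    have h1 : zstep (1, -1) z - z = -1 := by simp [zstep]
    rw [h1]
    by_cases h : (-1 : ℤ) = w
    · rw [if_pos h, if_pos h, nuMass, if_pos rfl]
    · rw [if_neg h, if_neg h]
  rw [hfirst]
  set g : ℤ × ℤ → ℝ≥0∞ :=
    fun d => if d = (1, -1) then 0 else if zstep d z - z = w then nuMass d else 0 with hgdef
  have hinj : Function.Injective (fun p : ℕ × ℕ => ((-(p.1 : ℤ), (p.2 : ℤ)) : ℤ × ℤ)) := by
    rintro ⟨a, b⟩ ⟨c, d⟩ h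
    simp only [Prod.mk.injEq, neg_inj, Nat.cast_inj] at h
    exact Prod.ext (by omega) (by omega)
  have hsupp : Function.support g
      ⊆ Set.range (fun p : ℕ × ℕ => ((-(p.1 : ℤ), (p.2 : ℤ)) : ℤ × ℤ)) := by
    rintro ⟨d1, d2⟩ hd
    simp only [Function.mem_support, hgdef] at hd
    by_cases h1 : ((d1, d2) : ℤ × ℤ) = (1, -1)
    · simp [h1] at hd
    · have h2 : nuMass (d1, d2) ≠ 0 := by
        intro h; apply hd; simp [h1, h]
      have h3 : d1 ≤ 0 ∧ 0 ≤ d2 := by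
        by_contra h3
        exact h2 (by simp [nuMass, h1, h3])
      exact ⟨((-d1).toNat, d2.toNat), by
        simp only [Prod.mk.injEq]
        constructor <;> omega⟩
  have hreindex : ∑' d : ℤ × ℤ, g d = ∑' p : ℕ × ℕ, g (-(p.1 : ℤ), (p.2 : ℤ)) :=
    (hinj.tsum_eq hsupp).symm
  rw [hreindex, ENNReal.tsum_prod']
  have hg : ∀ i j : ℕ, g (-(i : ℤ), (j : ℤ)) =
      if (if 0 ≤ z then (j : ℤ) else if z < -(i : ℤ) then (i : ℤ) else (j : ℤ) - z) = w
      then (2⁻¹ : ℝ≥0∞) ^ (i + j + 3) else 0 := by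
    intro i j
    have hne : ((-(i : ℤ), (j : ℤ)) : ℤ × ℤ) ≠ (1, -1) := by
      simp only [ne_eq, Prod.mk.injEq, not_and]
      intro h; omega
    have hnu : nuMass (-(i : ℤ), (j : ℤ)) = (2⁻¹ : ℝ≥0∞) ^ (i + j + 3) := by
      have ht : ((i : ℤ) + (j : ℤ) + 3).toNat = i + j + 3 := by omega
      simp [nuMass, hne]
      rw [ht]
    have hzs : zstep (-(i : ℤ), (j : ℤ)) z - z
        = if 0 ≤ z then (j : ℤ) else if z < -(i : ℤ) then (i : ℤ) else (j : ℤ) - z := by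
      simp only [zstep, if_neg hne]
      by_cases h0 : 0 ≤ z
      · simp [h0]
      · by_cases h1 : z < -(i : ℤ) <;> simp [h0, h1] <;> ring
    simp only [hgdef, if_neg hne, hzs, hnu]
  simp_rw [hg]
  by_cases hw : 0 ≤ w
  · lift w to ℕ using hw with n
    rw [if_neg (by omega), zero_add]
    by_cases h0 : 0 ≤ z
    · -- z ≥ 0 : inner condition (j : ℤ) = n
      have hinner : ∀ i : ℕ,
          (∑' j : ℕ, if (if 0 ≤ z then (j : ℤ) else if z < -(i : ℤ) then (i : ℤ)
              else (j : ℤ) - z) = (n : ℤ) then (2⁻¹ : ℝ≥0∞) ^ (i + j + 3) else 0)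
            = (2⁻¹ : ℝ≥0∞) ^ (i + n + 3) := by
        intro i
        rw [tsum_eq_single n]
        · rw [if_pos (by rw [if_pos h0])]
        · intro j hj
          rw [if_neg (by rw [if_pos h0]; exact_mod_cast hj)]
      simp_rw [hinner]
      have he : ∀ i : ℕ, i + n + 3 = i + ((n + 2) + 1) := by omega
      simp_rw [he]
      have htn : ((n : ℤ) + 2).toNat = n + 2 := by omega
      rw [geo_shift' (n + 2), muMass, if_neg (by omega), if_pos (by omega), htn]
    · -- z < 0
      simp only [if_neg h0]
      set m : ℕ := (-z).toNat with hm
      have hmz : (m : ℤ) = -z := by omega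
      by_cases hnz : 0 ≤ (n : ℤ) + z
      · set j0 : ℕ := ((n : ℤ) + z).toNat with hj0
        have hj0z : (j0 : ℤ) = (n : ℤ) + z := by omega
        have hinner : ∀ i : ℕ,
            (∑' j : ℕ, if (if z < -(i : ℤ) then (i : ℤ) else (j : ℤ) - z) = (n : ℤ)
              then (2⁻¹ : ℝ≥0∞) ^ (i + j + 3) else 0)
            = if m ≤ i then (2⁻¹ : ℝ≥0∞) ^ (i + (j0 + 2 + 1)) else 0 := by
          intro i
          by_cases hi : z < -(i : ℤ)
          · rw [if_neg (show ¬ m ≤ i by omega)]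
            have hzero : ∀ j : ℕ,
                (if (if z < -(i : ℤ) then (i : ℤ) else (j : ℤ) - z) = (n : ℤ)
                  then (2⁻¹ : ℝ≥0∞) ^ (i + j + 3) else 0) = 0 := by
              intro j
              rw [if_pos hi, if_neg (by omega)]
            simp_rw [hzero, tsum_zero]
          · rw [if_pos (show m ≤ i by omega)]
            rw [tsum_eq_single j0]
            · rw [if_neg hi, if_pos (by omega), show i + j0 + 3 = i + (j0 + 2 + 1) from by omega]
            · intro j hj
              rw [if_neg hi, if_neg (by intro h; apply hj; omega)]
        simp_rw [hinner]
        rw [geo_tail m (j0 + 2)]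
        rw [muMass, if_neg (by omega), if_pos (by omega)]
        rw [show ((n : ℤ) + 2).toNat = n + 2 from by omega]
        congr 1
        omega
      · have hinner : ∀ i : ℕ,
            (∑' j : ℕ, if (if z < -(i : ℤ) then (i : ℤ) else (j : ℤ) - z) = (n : ℤ)
              then (2⁻¹ : ℝ≥0∞) ^ (i + j + 3) else 0)
            = if i = n then (2⁻¹ : ℝ≥0∞) ^ (n + 2) else 0 := by
          intro i
          by_cases hin : i = n
          · subst hin
            rw [if_pos rfl]
            have hterm : ∀ j : ℕ,
                (if (if z < -(i : ℤ) then (i : ℤ) else (j : ℤ) - z) = (i : ℤ)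
                  then (2⁻¹ : ℝ≥0∞) ^ (i + j + 3) else 0) = (2⁻¹ : ℝ≥0∞) ^ (j + (i + 2 + 1)) := by
              intro j
              rw [if_pos (by rw [if_pos (show z < -(i : ℤ) by omega)]), show i + j + 3 = j + (i + 2 + 1) from by omega]
            simp_rw [hterm]
            exact geo_shift' (i + 2)
          · rw [if_neg hin]
            have hzero : ∀ j : ℕ,
                (if (if z < -(i : ℤ) then (i : ℤ) else (j : ℤ) - z) = (n : ℤ)
                  then (2⁻¹ : ℝ≥0∞) ^ (i + j + 3) else 0) = 0 := by
              intro j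
              by_cases hi : z < -(i : ℤ)
              · rw [if_pos hi, if_neg (by intro h; apply hin; omega)]
              · rw [if_neg hi, if_neg (by omega)]
            simp_rw [hzero, tsum_zero]
        simp_rw [hinner]
        rw [tsum_eq_single n (fun i hi => by rw [if_neg hi])]
        rw [if_pos rfl, muMass, if_neg (by omega), if_pos (by omega)]
        rw [show ((n : ℤ) + 2).toNat = n + 2 from by omega]
  · push_neg at hw
    have hz1 : ∀ i j : ℕ,
        (if (if 0 ≤ z then (j : ℤ) else if z < -(i : ℤ) then (i : ℤ) else (j : ℤ) - z) = w
          then (2⁻¹ : ℝ≥0∞) ^ (i + j + 3) else 0) = 0 := by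
      intro i j
      rw [if_neg]
      by_cases h0 : 0 ≤ z
      · rw [if_pos h0]; omega
      · rw [if_neg h0]
        by_cases h1 : z < -(i : ℤ)
        · rw [if_pos h1]; omega
        · rw [if_neg h1]; omega
    simp_rw [hz1]
    simp only [tsum_zero, add_zero]
    rw [muMass]
    by_cases hw1 : w = -1
    · rw [if_pos (by omega), if_pos hw1]
    · rw [if_neg (by omega), if_neg hw1, if_neg (by omega)]

section Walk

variable {Ω : Type*} [MeasurableSpace Ω] (μ : Measure Ω) [IsProbabilityMeasure μ]
  (ξ : ℕ → Ω → ℤ × ℤ)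

lemma Zproc_congr {Ω' : Type*} (η : ℕ → Ω' → ℤ × ℤ) (ω : Ω) (ω' : Ω') :
    ∀ n : ℕ, (∀ i < n, ξ i ω = η i ω') → Zproc ξ n ω = Zproc η n ω' := by
  intro n
  induction n with
  | zero => intro _; rfl
  | succ k ih =>
    intro h
    simp only [Zproc]
    rw [h k (by omega), ih (fun i hi => h i (by omega))]

lemma Zproc_eq_sum (ω : Ω) (n : ℕ) :
    Zproc ξ n ω = ∑ k ∈ Finset.range n, (Zproc ξ (k + 1) ω - Zproc ξ k ω) := by
  induction n with
  | zero => rfl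
  | succ k ih => rw [Finset.sum_range_succ, ← ih]; ring

lemma measurable_Zproc (hmeas : ∀ k, Measurable (ξ k)) (n : ℕ) :
    Measurable (Zproc ξ n) := by
  induction n with
  | zero => exact measurable_const
  | succ k ih =>
    exact (Measurable.of_discrete (f := fun p : (ℤ × ℤ) × ℤ => zstep p.1 p.2)).comp
      ((hmeas k).prodMk ih)

lemma meas_preimage (hdist : ∀ k, ∀ d : ℤ × ℤ, μ {ω | ξ k ω = d} = nuMass d)
    (hmeas : ∀ k, Measurable (ξ k)) (k : ℕ) (S : Set (ℤ × ℤ)) :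
    μ (ξ k ⁻¹' S) = ∑' d : S, nuMass d := by
  have h1 : ξ k ⁻¹' S = ⋃ d : S, ξ k ⁻¹' {(d : ℤ × ℤ)} := by
    ext ω; simp
  rw [h1, measure_iUnion]
  · exact tsum_congr fun d => hdist k d
  · intro a b hab
    simp only [Set.disjoint_left]
    intro ω h1 h2
    simp only [Set.mem_preimage, Set.mem_singleton_iff] at h1 h2
    exact hab (Subtype.ext (h1 ▸ h2))
  · exact fun d => (hmeas k) (measurableSet_singleton _)

lemma meas_step_set (hdist : ∀ k, ∀ d : ℤ × ℤ, μ {ω | ξ k ω = d} = nuMass d)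
    (hmeas : ∀ k, Measurable (ξ k)) (k : ℕ) (z : ℤ) (B : Set ℤ) :
    μ (ξ k ⁻¹' {d | zstep d z - z ∈ B}) = ∑' v : B, muMass v := by
  have h1 : ξ k ⁻¹' {d | zstep d z - z ∈ B}
      = ⋃ v : B, ξ k ⁻¹' {d | zstep d z - z = (v : ℤ)} := by
    ext ω; simp
  rw [h1, measure_iUnion]
  · refine tsum_congr fun v => ?_
    rw [meas_preimage μ ξ hdist hmeas, tsum_subtype]
    simp only [Set.indicator_apply, Set.mem_setOf_eq]
    exact tsum_nuMass_zstep z v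
  · intro a b hab
    simp only [Set.disjoint_left]
    intro ω h1 h2
    simp only [Set.mem_preimage, Set.mem_setOf_eq] at h1 h2
    exact hab (Subtype.ext (h1 ▸ h2))
  · exact fun v => (hmeas k) MeasurableSet.of_discrete

lemma prefix_formula (hmeas : ∀ k, Measurable (ξ k))
    (hindep : iIndepFun ξ μ)
    (hdist : ∀ k, ∀ d : ℤ × ℤ, μ {ω | ξ k ω = d} = nuMass d) :
    ∀ (n : ℕ) (B : ℕ → Set ℤ),
      μ (⋂ k ∈ Finset.range n, (fun ω => Zproc ξ (k + 1) ω - Zproc ξ k ω) ⁻¹' B k)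
        = ∏ k ∈ Finset.range n, ∑' v : B k, muMass v := by
  intro n
  induction n with
  | zero => intro B; simp
  | succ n ih =>
    intro B
    set inc : ℕ → Ω → ℤ := fun k ω => Zproc ξ (k + 1) ω - Zproc ξ k ω with hinc
    have hmeasinc : ∀ k, Measurable (inc k) :=
      fun k => (measurable_Zproc ξ hmeas (k + 1)).sub (measurable_Zproc ξ hmeas k)
    set T : Ω → (↥(Finset.range n) → ℤ × ℤ) := fun ω i => ξ i ω with hTdef
    have hTmeas : Measurable T := measurable_pi_lambda _ (fun i => hmeas i)
    have hIndep : IndepFun T (ξ n) μ := by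
      have h := hindep.indepFun_finset (Finset.range n) {n} (by simp) hmeas
      exact h.comp measurable_id
        (measurable_pi_apply (⟨n, Finset.mem_singleton_self n⟩ : ({n} : Finset ℕ)))
    set Dfun : (ℕ → ℤ × ℤ) → ℕ → ℤ := fun v k => Zproc (fun i (x : ℕ → ℤ × ℤ) => x i) k v
      with hDdef
    set pad : (↥(Finset.range n) → ℤ × ℤ) → ℕ → ℤ × ℤ :=
      fun u i => if h : i ∈ Finset.range n then u ⟨i, h⟩ else (1, 1) with hpad
    have hkey : ∀ (ω : Ω) (k : ℕ), k ≤ n → Zproc ξ k ω = Dfun (pad (T ω)) k := by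
      intro ω k hk
      refine Zproc_congr ξ _ ω _ k (fun i hi => ?_)
      have hin : i ∈ Finset.range n := Finset.mem_range.mpr (by omega)
      simp only [hpad, hTdef, dif_pos hin]
    have hincT : ∀ (ω : Ω) (k : ℕ), k < n →
        inc k ω = Dfun (pad (T ω)) (k + 1) - Dfun (pad (T ω)) k := by
      intro ω k hk
      rw [hinc]
      simp only
      rw [hkey ω (k + 1) (by omega), hkey ω k (by omega)]
    set E : (Fin n → ℤ) → Set Ω := fun w => ⋂ k : Fin n, inc k ⁻¹' ({w k} ∩ B k) with hE
    have hEeq : ∀ w, E w = T ⁻¹'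
        {u | ∀ k : Fin n, (Dfun (pad u) (k + 1) - Dfun (pad u) k) ∈ ({w k} ∩ B (k : ℕ))} := by
      intro w
      ext ω
      simp only [hE, Set.mem_iInter, Set.mem_preimage, Set.mem_setOf_eq]
      constructor
      · intro h k
        rw [← hincT ω k k.isLt]
        exact h k
      · intro h k
        have := h k
        rwa [← hincT ω k k.isLt] at this
    have hEmeas : ∀ w, MeasurableSet (E w) := fun w => by
      rw [hEeq]; exact hTmeas MeasurableSet.of_discrete
    have hdecomp : (⋂ k ∈ Finset.range n, inc k ⁻¹' B k) = ⋃ w : Fin n → ℤ, E w := by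
      ext ω
      simp only [Set.mem_iInter, Set.mem_iUnion, hE, Set.mem_preimage, Finset.mem_range,
        Set.mem_inter_iff, Set.mem_singleton_iff]
      constructor
      · intro h
        exact ⟨fun k => inc k ω, fun k => ⟨rfl, h k k.isLt⟩⟩
      · rintro ⟨w, hw⟩ k hk
        exact (hw ⟨k, hk⟩).2
    have hdisj : Pairwise (Function.onFun Disjoint E) := by
      intro a b hab
      rw [Function.onFun, Set.disjoint_left]
      intro ω ha hb
      apply hab
      funext k
      have h1 := Set.mem_iInter.mp ha k
      have h2 := Set.mem_iInter.mp hb k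
      simp only [Set.mem_preimage, Set.mem_inter_iff, Set.mem_singleton_iff] at h1 h2
      rw [← h1.1, ← h2.1]
    have hzw : ∀ w : Fin n → ℤ, ∀ ω ∈ E w, Zproc ξ n ω = ∑ k : Fin n, w k := by
      intro w ω hω
      rw [Zproc_eq_sum ξ ω n, ← Fin.sum_univ_eq_sum_range (fun k => Zproc ξ (k + 1) ω - Zproc ξ k ω) n]
      refine Finset.sum_congr rfl fun k _ => ?_
      have := Set.mem_iInter.mp hω k
      simp only [Set.mem_preimage, Set.mem_inter_iff, Set.mem_singleton_iff, hinc] at this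
      exact this.1
    have hsplit : ∀ w : Fin n → ℤ,
        E w ∩ inc n ⁻¹' B n
          = E w ∩ ξ n ⁻¹' {d | zstep d (∑ k : Fin n, w k) - (∑ k : Fin n, w k) ∈ B n} := by
      intro w
      ext ω
      simp only [Set.mem_inter_iff, Set.mem_preimage, Set.mem_setOf_eq]
      refine and_congr_right fun h1 => ?_
      have hz := hzw w ω h1
      have h2 : inc n ω = zstep (ξ n ω) (Zproc ξ n ω) - Zproc ξ n ω := rfl
      rw [h2, hz]
    have hfact : ∀ w : Fin n → ℤ,
        μ (E w ∩ inc n ⁻¹' B n) = μ (E w) * ∑' v : B n, muMass v := by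
      intro w
      rw [hsplit w]
      conv_lhs => rw [hEeq w]
      conv_rhs => rw [hEeq w]
      rw [hIndep.measure_inter_preimage_eq_mul _ _ MeasurableSet.of_discrete
        MeasurableSet.of_discrete, meas_step_set μ ξ hdist hmeas]
    rw [Finset.range_add_one, Finset.set_biInter_insert, Set.inter_comm, hdecomp,
      Set.iUnion_inter, measure_iUnion
        (fun a b hab => ((hdisj hab).mono Set.inter_subset_left Set.inter_subset_left))
        (fun w => (hEmeas w).inter ((hmeasinc n) MeasurableSet.of_discrete))]
    calc ∑' w : Fin n → ℤ, μ (E w ∩ inc n ⁻¹' B n)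
        = ∑' w : Fin n → ℤ, μ (E w) * ∑' v : B n, muMass v := tsum_congr hfact
      _ = (∑' w : Fin n → ℤ, μ (E w)) * ∑' v : B n, muMass v := ENNReal.tsum_mul_right
      _ = μ (⋃ w : Fin n → ℤ, E w) * ∑' v : B n, muMass v := by
          rw [measure_iUnion hdisj hEmeas]
      _ = (∏ k ∈ Finset.range n, ∑' v : B k, muMass v) * ∑' v : B n, muMass v := by
          rw [← hdecomp, ih B]
      _ = ∏ k ∈ insert n (Finset.range n), ∑' v : B k, muMass v := by
          rw [Finset.prod_insert Finset.notMem_range_self, mul_comm]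

lemma total_mass (hmeas : ∀ k, Measurable (ξ k))
    (hindep : iIndepFun ξ μ)
    (hdist : ∀ k, ∀ d : ℤ × ℤ, μ {ω | ξ k ω = d} = nuMass d) :
    ∑' v : (Set.univ : Set ℤ), muMass v = 1 := by
  have h := prefix_formula μ ξ hmeas hindep hdist 1 (fun _ => Set.univ)
  simp only [Set.preimage_univ, Finset.range_one, Finset.prod_singleton,
    Set.iInter_univ, Finset.mem_singleton, Set.iInter_iInter_eq_left] at h
  rw [← h]
  simp

lemma marginal (hmeas : ∀ k, Measurable (ξ k))
    (hindep : iIndepFun ξ μ)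
    (hdist : ∀ k, ∀ d : ℤ × ℤ, μ {ω | ξ k ω = d} = nuMass d) (k : ℕ) (B : Set ℤ) :
    μ ((fun ω => Zproc ξ (k + 1) ω - Zproc ξ k ω) ⁻¹' B) = ∑' v : B, muMass v := by
  have h := prefix_formula μ ξ hmeas hindep hdist (k + 1)
    (fun i => if i = k then B else Set.univ)
  have hL : (⋂ i ∈ Finset.range (k + 1),
      (fun ω => Zproc ξ (i + 1) ω - Zproc ξ i ω) ⁻¹' (if i = k then B else Set.univ))
      = (fun ω => Zproc ξ (k + 1) ω - Zproc ξ k ω) ⁻¹' B := by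
    ext ω
    simp only [Set.mem_iInter, Set.mem_preimage, Finset.mem_range]
    constructor
    · intro h
      have := h k (by omega)
      rwa [if_pos rfl] at this
    · intro hb i hi
      by_cases hik : i = k
      · subst hik; rwa [if_pos rfl]
      · rw [if_neg hik]; exact Set.mem_univ _
  rw [hL] at h
  rw [h, Finset.prod_eq_single k]
  · rw [if_pos rfl]
  · intro i _ hik
    rw [if_neg hik]
    exact total_mass μ ξ hmeas hindep hdist
  · intro hk
    exact absurd (Finset.mem_range.mpr (by omega)) hk

end Walk

/-- If `(ξ_k)` are i.i.d. with law `ν`, then the process `(Z_k)` defined by the coalescent-walk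
recursion is a random walk: its increments `(Z_{k+1} - Z_k)` are independent and identically
distributed, with law `μ` given by `μ({-1}) = 1/2` and `μ({j}) = 2^{-j-2}` for `j ≥ 0`. -/
theorem Zproc_isRandomWalk {Ω : Type*} [MeasurableSpace Ω]
    (μ : Measure Ω) [IsProbabilityMeasure μ]
    (ξ : ℕ → Ω → ℤ × ℤ) (hmeas : ∀ k, Measurable (ξ k))
    (hindep : iIndepFun ξ μ)
    (hdist : ∀ k, ∀ d : ℤ × ℤ, μ {ω | ξ k ω = d} = nuMass d) :
    iIndepFun
      (fun k ω => Zproc ξ (k + 1) ω - Zproc ξ k ω) μ ∧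
    ∀ k, ∀ z : ℤ, μ {ω | Zproc ξ (k + 1) ω - Zproc ξ k ω = z} = muMass z := by
  constructor
  · rw [iIndepFun_iff_measure_inter_preimage_eq_mul]
    intro S sets _
    set n := S.sup id + 1 with hn
    have hSn : ∀ i ∈ S, i ∈ Finset.range n := fun i hi =>
      Finset.mem_range.mpr (by have := Finset.le_sup (f := id) hi; simp only [id] at this; omega)
    set B : ℕ → Set ℤ := fun i => if i ∈ S then sets i else Set.univ with hB
    have h := prefix_formula μ ξ hmeas hindep hdist n B
    have hL : (⋂ i ∈ Finset.range n,
        (fun ω => Zproc ξ (i + 1) ω - Zproc ξ i ω) ⁻¹' B i)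
        = ⋂ i ∈ S, (fun ω => Zproc ξ (i + 1) ω - Zproc ξ i ω) ⁻¹' sets i := by
      ext ω
      simp only [Set.mem_iInter, Set.mem_preimage, hB, Finset.mem_range]
      constructor
      · intro h i hi
        have := h i (Finset.mem_range.mp (hSn i hi))
        rwa [if_pos hi] at this
      · intro h i _
        by_cases hi : i ∈ S
        · rw [if_pos hi]; exact h i hi
        · rw [if_neg hi]; exact Set.mem_univ _
    rw [hL] at h
    rw [h]
    rw [← Finset.prod_subset hSn (fun i _ hiS => by
      rw [hB]; simp only; rw [if_neg hiS]
      exact total_mass μ ξ hmeas hindep hdist)]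
    refine Finset.prod_congr rfl fun i hi => ?_
    rw [hB]
    simp only
    rw [if_pos hi, marginal μ ξ hmeas hindep hdist i (sets i)]
  · intro k z
    have hset : {ω | Zproc ξ (k + 1) ω - Zproc ξ k ω = z}
        = (fun ω => Zproc ξ (k + 1) ω - Zproc ξ k ω) ⁻¹' {z} := rfl
    rw [hset, marginal μ ξ hmeas hindep hdist k {z}, tsum_singleton]
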